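/- If G is a k×n generating matrix of a linear code C over a finite field F_q, then there exists a permutation x of the n coordinates such that the reduced row echelon form R of G·P_x (where P_x is the permutation matrix of x) has a row whose Hamming weight equals the minimum distance of C. -/

import Mathlib

/-- A matrix is in reduced row echelon form: zero rows are below nonzero rows;
each nonzero row has a pivot (first nonzero entry) equal to 1, with zeros to its left,
zeros in the rest of its column, and pivots move strictly to the right going down. -/
def IsRREF {k n : ℕ} {F : Type*} [Field F] (M : Matrix (Fin k) (Fin n) F) : Prop :=
  (∀ i j : Fin k, i ≤ j → M i = 0 → M j = 0) ∧
  ∀ i : Fin k, M i ≠ 0 →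
    ∃ c : Fin n, M i c = 1 ∧ (∀ c' : Fin n, c' < c → M i c' = 0) ∧
      (∀ i' : Fin k, i' ≠ i → M i' c = 0) ∧
      ∀ i' : Fin k, i < i' → M i' ≠ 0 →
        ∀ c' : Fin n, (M i' c' ≠ 0 ∧ ∀ c'' : Fin n, c'' < c' → M i' c'' = 0) → c < c'

/-- Given a generating matrix `G` of a linear code `C` over a finite field (its rows form a
basis of `C`), there is a column permutation `σ` such that the RREF `R` of the
column-permuted matrix `G·P_σ` has a row whose Hamming weight equals the minimum
distance `d` of `C`. -/
theorem exists_perm_rref_row_weight_eq_minDist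
    {k n : ℕ} {F : Type*} [Field F] [Fintype F] [DecidableEq F]
    (G : Matrix (Fin k) (Fin n) F) (C : Submodule F (Fin n → F))
    (hC : C = Submodule.span F (Set.range G))
    (hbasis : LinearIndependent F G)
    (d : ℕ)
    (hd : IsLeast {w | ∃ c ∈ C, c ≠ 0 ∧ hammingNorm c = w} d) :
    ∃ (σ : Equiv.Perm (Fin n)) (R : Matrix (Fin k) (Fin n) F)
      (A : Matrix (Fin k) (Fin k) F),
      IsUnit A ∧ R = A * G.submatrix id σ ∧ IsRREF R ∧
      ∃ i : Fin k, hammingNorm (R i) = d := by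
  classical
  obtain ⟨⟨c, hcC, hc0, hcw⟩, hmin⟩ := hd
  have hd1 : 1 ≤ d := by
    rcases Nat.eq_zero_or_pos d with h | h
    · rw [h] at hcw
      exact absurd (hammingNorm_eq_zero.mp hcw) hc0
    · exact h
  have hdn : d ≤ n := by
    have := hammingNorm_le_card_fintype (x := c)
    simpa [hcw] using this
  have hn0 : 0 < n := hd1.trans hdn
  set col : Fin n → (Fin k → F) := fun j i => G i j with hcoldef
  obtain ⟨x, hx⟩ : ∃ x : Fin k → F, (∑ i, x i • G i) = c := by
    rw [hC] at hcC
    exact (Submodule.mem_span_range_iff_exists_fun F).mp hcC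
  have hxc : ∀ j, (∑ l, x l * G l j) = c j := by
    intro j
    have := congrFun hx j
    simpa [Finset.sum_apply] using this
  -- a linearly independent set of columns spanning the columns where c vanishes
  obtain ⟨b, hbsub, hbspan, hbind⟩ := exists_linearIndependent F (col '' {j | c j = 0})
  have hTspan : ∀ j : Fin n, c j = 0 → col j ∈ Submodule.span F b := by
    intro j hj
    rw [hbspan]
    exact Submodule.subset_span ⟨j, hj, rfl⟩
  have hUne : Submodule.span F b ≠ ⊤ := by
    intro htop
    obtain ⟨l0, hl0⟩ : ∃ l0, x l0 ≠ 0 := by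
      by_contra h
      push_neg at h
      apply hc0
      funext j
      rw [← hxc j]
      simp [h]
    set ψc : (Fin k → F) →ₗ[F] F := ∑ l, x l • (LinearMap.proj l) with hψcdef
    have hψcap : ∀ u, ψc u = ∑ l, x l * u l := by
      intro u
      simp [hψcdef, LinearMap.sum_apply, smul_eq_mul]
    have hker : Submodule.span F b ≤ LinearMap.ker ψc := by
      rw [hbspan]
      apply Submodule.span_le.mpr
      rintro v ⟨j, hj, rfl⟩
      rw [SetLike.mem_coe, LinearMap.mem_ker, hψcap, hxc j]
      exact hj
    rw [htop] at hker
    have h0 : ψc (Pi.single l0 1) = 0 :=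
      LinearMap.mem_ker.mp (hker Submodule.mem_top)
    rw [hψcap] at h0
    apply hl0
    rw [← h0]
    rw [Finset.sum_eq_single l0]
    · simp
    · intro l _ hl
      simp [Pi.single_apply, hl]
    · simp
  -- the columns of G span everything
  have hspanT : Submodule.span F (Set.range col) = ⊤ := by
    have h1 : G.rank = k := by simpa using hbasis.rank_matrix
    have h2 : G.rank = Module.finrank F (Submodule.span F (Set.range G.transpose)) :=
      G.rank_eq_finrank_span_cols
    have hrange : Set.range G.transpose = Set.range col := rfl
    apply Submodule.eq_top_of_finrank_eq
    rw [← hrange, ← h2, h1]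
    simp [Module.finrank_fintype_fun_eq_card]
  -- extend b to a basis inside the columns
  have hbsubt : b ⊆ b ∪ Set.range col := Set.subset_union_left
  have hbind' : LinearIndepOn F id b := hbind
  set B0 : Set (Fin k → F) := hbind'.extend hbsubt with hB0def
  have hB0ind : LinearIndependent F ((↑) : B0 → (Fin k → F)) :=
    hbind'.linearIndepOn_extend hbsubt
  have hB0sub : B0 ⊆ b ∪ Set.range col := hbind'.extend_subset hbsubt
  have hbB0 : b ⊆ B0 := hbind'.subset_extend hbsubt
  have hB0span : Submodule.span F B0 = ⊤ := by
    rw [eq_top_iff, ← hspanT]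
    apply Submodule.span_le.mpr
    intro v hv
    exact hbind'.subset_span_extend hbsubt (Set.mem_union_right _ hv)
  have hB0fin : B0.Finite := hB0ind.setFinite
  have hbfin : b.Finite := hbind.setFinite
  set bF := hbfin.toFinset with hbFdef
  set B0F := hB0fin.toFinset with hB0Fdef
  have hbFsub : bF ⊆ B0F := by
    rw [hbFdef, hB0Fdef, Set.Finite.toFinset_subset_toFinset]
    exact hbB0
  have hB0card : B0F.card = k := by
    haveI : Fintype B0 := hB0fin.fintype
    have h1 := finrank_span_set_eq_card hB0ind
    rw [hB0span, finrank_top, Module.finrank_fintype_fun_eq_card, Fintype.card_fin] at h1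
    rw [hB0Fdef, Set.Finite.toFinset_eq_toFinset]
    exact h1.symm
  set m := bF.card with hmdef
  have hmk : m < k := by
    rw [← hB0card]
    apply Finset.card_lt_card
    refine ⟨hbFsub, fun hsub => hUne ?_⟩
    have hBb : B0 ⊆ b := by
      intro u hu
      have : u ∈ bF := hsub (by rw [hB0Fdef, Set.Finite.mem_toFinset]; exact hu)
      rwa [hbFdef, Set.Finite.mem_toFinset] at this
    have hle : Submodule.span F B0 ≤ Submodule.span F b := Submodule.span_mono hBb
    rw [hB0span] at hle
    exact eq_top_iff.mpr hle
  -- choice of column indices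
  have hex0 : ∀ u ∈ b, ∃ j : Fin n, c j = 0 ∧ col j = u := by
    intro u hu
    obtain ⟨j, hj, rfl⟩ := hbsub hu
    exact ⟨j, hj, rfl⟩
  set g0 : (Fin k → F) → Fin n :=
    fun u => if h : ∃ j : Fin n, c j = 0 ∧ col j = u then h.choose else ⟨0, hn0⟩ with hg0def
  have hg0 : ∀ u ∈ b, c (g0 u) = 0 ∧ col (g0 u) = u := by
    intro u hu
    have h := hex0 u hu
    simp only [hg0def, dif_pos h]
    exact h.choose_spec
  have hex1 : ∀ u ∈ B0 \ b, ∃ j : Fin n, c j ≠ 0 ∧ col j = u := by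
    intro u hu
    obtain ⟨huB0, hub⟩ := hu
    rcases hB0sub huB0 with hub' | ⟨j, rfl⟩
    · exact absurd hub' hub
    · refine ⟨j, fun hj => ?_, rfl⟩
      have hmem : col j ∈ Submodule.span F b := hTspan j hj
      have hins : LinearIndependent F ((↑) : (insert (col j) b : Set (Fin k → F)) → (Fin k → F)) :=
        (show LinearIndepOn F id B0 from hB0ind).mono (Set.insert_subset huB0 hbB0)
      exact ((linearIndepOn_id_insert hub).mp hins).2 hmem
  set g1 : (Fin k → F) → Fin n :=
    fun u => if h : ∃ j : Fin n, c j ≠ 0 ∧ col j = u then h.choose else ⟨0, hn0⟩ with hg1def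
  have hg1 : ∀ u ∈ B0 \ b, c (g1 u) ≠ 0 ∧ col (g1 u) = u := by
    intro u hu
    have h := hex1 u hu
    simp only [hg1def, dif_pos h]
    exact h.choose_spec
  set J0 : Finset (Fin n) := bF.image g0 with hJ0def
  set J1 : Finset (Fin n) := (B0F \ bF).image g1 with hJ1def
  have hmembF : ∀ u, u ∈ bF ↔ u ∈ b := fun u => Set.Finite.mem_toFinset _
  have hmemB0F : ∀ u, u ∈ B0F ↔ u ∈ B0 := fun u => Set.Finite.mem_toFinset _
  have hmemdiff : ∀ u, u ∈ B0F \ bF ↔ u ∈ B0 \ b := by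
    intro u
    rw [Finset.mem_sdiff, hmembF, hmemB0F]
    exact Iff.rfl
  have hJ0card : J0.card = m := by
    rw [hJ0def]
    apply Finset.card_image_of_injOn
    intro u1 h1 u2 h2 he
    rw [← (hg0 u1 ((hmembF u1).mp h1)).2, he, (hg0 u2 ((hmembF u2).mp h2)).2]
  have hJ1card : J1.card = k - m := by
    rw [hJ1def]
    rw [Finset.card_image_of_injOn, Finset.card_sdiff_of_subset hbFsub, hB0card]
    intro u1 h1 u2 h2 he
    rw [← (hg1 u1 ((hmemdiff u1).mp h1)).2, he, (hg1 u2 ((hmemdiff u2).mp h2)).2]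
  have hJ0prop : ∀ j ∈ J0, c j = 0 ∧ col j ∈ b ∧ g0 (col j) = j := by
    intro j hj
    rw [hJ0def, Finset.mem_image] at hj
    obtain ⟨u, hu, rfl⟩ := hj
    have hu' := (hmembF u).mp hu
    obtain ⟨h1, h2⟩ := hg0 u hu'
    rw [h2]
    exact ⟨h1, hu', rfl⟩
  have hJ1prop : ∀ j ∈ J1, c j ≠ 0 ∧ col j ∈ B0 \ b ∧ g1 (col j) = j := by
    intro j hj
    rw [hJ1def, Finset.mem_image] at hj
    obtain ⟨u, hu, rfl⟩ := hj
    have hu' := (hmemdiff u).mp hu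
    obtain ⟨h1, h2⟩ := hg1 u hu'
    rw [h2]
    exact ⟨h1, hu', rfl⟩
  have hg0J0 : ∀ u ∈ b, g0 u ∈ J0 := by
    intro u hu
    rw [hJ0def]
    exact Finset.mem_image_of_mem g0 ((hmembF u).mpr hu)
  -- S and T
  set S : Finset (Fin n) := Finset.univ.filter (fun j : Fin n => c j ≠ 0) with hSdef
  set T : Finset (Fin n) := Finset.univ.filter (fun j : Fin n => c j = 0) with hTdef
  have hScard : S.card = d := by
    rw [← hcw, hSdef]
    rfl
  have hSTcard : T.card + S.card = n := by
    have h := Finset.card_filter_add_card_filter_not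
      (s := (Finset.univ : Finset (Fin n))) (p := fun j : Fin n => c j = 0)
    simpa [hSdef, hTdef] using h
  have hTcard : T.card = n - d := by omega
  have hJ0subT : J0 ⊆ T := by
    intro j hj
    rw [hTdef, Finset.mem_filter]
    exact ⟨Finset.mem_univ _, (hJ0prop j hj).1⟩
  have hJ1subS : J1 ⊆ S := by
    intro j hj
    rw [hSdef, Finset.mem_filter]
    exact ⟨Finset.mem_univ _, (hJ1prop j hj).1⟩
  have hmnd : m ≤ n - d := by
    rw [← hJ0card, ← hTcard]
    exact Finset.card_le_card hJ0subT
  have hkmd : k - m ≤ d := by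
    rw [← hJ1card, ← hScard]
    exact Finset.card_le_card hJ1subS
  -- the list of columns in their new order
  set T1 : Finset (Fin n) := T \ J0 with hT1def
  set S1 : Finset (Fin n) := S \ J1 with hS1def
  have hT1card : T1.card = n - d - m := by
    rw [hT1def, Finset.card_sdiff_of_subset hJ0subT, hTcard, hJ0card]
  have hS1card : S1.card = d - (k - m) := by
    rw [hS1def, Finset.card_sdiff_of_subset hJ1subS, hScard, hJ1card]
  set l : List (Fin n) := J0.toList ++ (T1.toList ++ (J1.toList ++ S1.toList)) with hldef
  have hlen : l.length = n := by
    simp only [hldef, List.length_append, Finset.length_toList]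
    rw [hJ0card, hT1card, hJ1card, hS1card]
    omega
  have hdisjTS : ∀ j : Fin n, c j = 0 → c j ≠ 0 → False := fun j h1 h2 => h2 h1
  have hldisj : ∀ (P Q : Finset (Fin n)), (∀ a, a ∈ P → a ∈ Q → False) →
      P.toList.Disjoint Q.toList := by
    intro P Q h a ha hb
    exact h a (Finset.mem_toList.mp ha) (Finset.mem_toList.mp hb)
  have hT1T : ∀ j, j ∈ T1 → c j = 0 := by
    intro j hj
    rw [hT1def, Finset.mem_sdiff, hTdef, Finset.mem_filter] at hj
    exact hj.1.2
  have hS1S : ∀ j, j ∈ S1 → c j ≠ 0 := by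
    intro j hj
    rw [hS1def, Finset.mem_sdiff, hSdef, Finset.mem_filter] at hj
    exact hj.1.2
  have hJ0c : ∀ j, j ∈ J0 → c j = 0 := fun j hj => (hJ0prop j hj).1
  have hJ1c : ∀ j, j ∈ J1 → c j ≠ 0 := fun j hj => (hJ1prop j hj).1
  have hnd : l.Nodup := by
    rw [hldef]
    refine List.Nodup.append ?_ (List.Nodup.append ?_ (List.Nodup.append ?_ ?_ ?_) ?_) ?_
    · exact Finset.nodup_toList _
    · exact Finset.nodup_toList _
    · exact Finset.nodup_toList _
    · exact Finset.nodup_toList _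
    · exact hldisj _ _ fun a ha hb => (Finset.mem_sdiff.mp (hS1def ▸ hb)).2 ha
    · intro a ha hb
      rw [List.mem_append, Finset.mem_toList, Finset.mem_toList] at hb
      have ha' := hT1T a (Finset.mem_toList.mp ha)
      rcases hb with hb | hb
      · exact hJ1c a hb ha'
      · exact hS1S a hb ha'
    · intro a ha hb
      have ha' := Finset.mem_toList.mp ha
      rw [List.mem_append, List.mem_append, Finset.mem_toList, Finset.mem_toList,
        Finset.mem_toList] at hb
      rcases hb with hb | hb | hb
      · exact (Finset.mem_sdiff.mp (hT1def ▸ hb)).2 ha'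
      · exact hJ1c a hb (hJ0c a ha')
      · exact hS1S a hb (hJ0c a ha')
  have hmemall : ∀ j : Fin n, j ∈ l := by
    intro j
    rw [hldef]
    simp only [List.mem_append, Finset.mem_toList]
    by_cases hj : c j = 0
    · by_cases hjJ : j ∈ J0
      · exact Or.inl hjJ
      · refine Or.inr (Or.inl ?_)
        rw [hT1def, Finset.mem_sdiff, hTdef, Finset.mem_filter]
        exact ⟨⟨Finset.mem_univ _, hj⟩, hjJ⟩
    · by_cases hjJ : j ∈ J1
      · exact Or.inr (Or.inr (Or.inl hjJ))
      · refine Or.inr (Or.inr (Or.inr ?_))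
        rw [hS1def, Finset.mem_sdiff, hSdef, Finset.mem_filter]
        exact ⟨⟨Finset.mem_univ _, hj⟩, hjJ⟩
  set σ : Equiv.Perm (Fin n) :=
    (finCongr hlen.symm).trans (List.Nodup.getEquivOfForallMemList l hnd hmemall) with hσdef
  have hσ : ∀ p : Fin n, σ p = l.get (finCongr hlen.symm p) := fun p => rfl
  have hσget : ∀ (p : Fin n), σ p = l[(p : ℕ)]'(by rw [hlen]; exact p.2) := by
    intro p
    rw [hσ]
    simp [List.get_eq_getElem]
  have hlJ0 : J0.toList.length = m := by rw [Finset.length_toList, hJ0card]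
  have hlT1 : T1.toList.length = n - d - m := by rw [Finset.length_toList, hT1card]
  have hlJ1 : J1.toList.length = k - m := by rw [Finset.length_toList, hJ1card]
  have hσJ0 : ∀ p : Fin n, (p : ℕ) < m → σ p ∈ J0 := by
    intro p hp
    have hplt : (p : ℕ) < J0.toList.length := by omega
    have key : σ p = J0.toList[(p : ℕ)]'hplt := by
      rw [hσget p]
      exact List.getElem_append_left hplt
    rw [key]
    exact Finset.mem_toList.mp (List.getElem_mem _)
  have hσT1 : ∀ p : Fin n, m ≤ (p : ℕ) → (p : ℕ) < n - d → σ p ∈ T1 := by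
    intro p hp1 hp2
    have h1 : J0.toList.length ≤ (p : ℕ) := by omega
    have h2 : (p : ℕ) - J0.toList.length < T1.toList.length := by
      rw [hlJ0, hlT1]; omega
    have h2' : (p : ℕ) - J0.toList.length <
        (T1.toList ++ (J1.toList ++ S1.toList)).length := by
      rw [List.length_append]; omega
    have key : σ p = T1.toList[(p : ℕ) - J0.toList.length]'h2 := by
      rw [hσget p]
      rw [List.getElem_append_right h1]
      exact List.getElem_append_left h2
    rw [key]
    exact Finset.mem_toList.mp (List.getElem_mem _)
  have hσJ1 : ∀ p : Fin n, n - d ≤ (p : ℕ) → (p : ℕ) < n - d + (k - m) → σ p ∈ J1 := by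
    intro p hp1 hp2
    have h1 : J0.toList.length ≤ (p : ℕ) := by omega
    have h2 : T1.toList.length ≤ (p : ℕ) - J0.toList.length := by rw [hlJ0, hlT1]; omega
    have h3 : (p : ℕ) - J0.toList.length - T1.toList.length < J1.toList.length := by
      rw [hlJ0, hlT1, hlJ1]; omega
    have key : σ p = J1.toList[(p : ℕ) - J0.toList.length - T1.toList.length]'h3 := by
      rw [hσget p]
      rw [List.getElem_append_right h1, List.getElem_append_right h2]
      exact List.getElem_append_left h3
    rw [key]
    exact Finset.mem_toList.mp (List.getElem_mem _)
  have hσJ0' : ∀ j ∈ J0, ∃ p : Fin n, (p : ℕ) < m ∧ σ p = j := by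
    intro j hj
    obtain ⟨i, hi, hij⟩ := List.mem_iff_getElem.mp (Finset.mem_toList.mpr hj)
    have him : i < m := by omega
    have hin : i < n := by omega
    refine ⟨⟨i, hin⟩, him, ?_⟩
    rw [hσget ⟨i, hin⟩]
    have : l[i]'(by rw [hlen]; exact hin) = J0.toList[i]'hi := List.getElem_append_left hi
    rw [this, hij]
  -- pivot positions
  have hfvlt : ∀ i : Fin k,
      (if (i : ℕ) < m then (i : ℕ) else n - d + ((i : ℕ) - m)) < n := by
    intro i
    have hik := i.2
    split <;> omega
  set fv : Fin k → Fin n := fun i => ⟨_, hfvlt i⟩ with hfvdef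
  have hfv : ∀ i : Fin k,
      (fv i : ℕ) = if (i : ℕ) < m then (i : ℕ) else n - d + ((i : ℕ) - m) := fun i => rfl
  have hfvmono : ∀ i i' : Fin k, (i : ℕ) < (i' : ℕ) → (fv i : ℕ) < (fv i' : ℕ) := by
    intro i i' h
    rw [hfv, hfv]
    split <;> split <;> omega
  -- the pivot submatrix
  set B : Matrix (Fin k) (Fin k) F := Matrix.of (fun i i' => G i (σ (fv i'))) with hBdef
  have hvmem : ∀ i' : Fin k, col (σ (fv i')) ∈ B0 := by
    intro i'
    by_cases h : (i' : ℕ) < m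
    · have : σ (fv i') ∈ J0 := by
        apply hσJ0
        rw [hfv, if_pos h]
        exact h
      exact hbB0 (hJ0prop _ this).2.1
    · have : σ (fv i') ∈ J1 := by
        apply hσJ1 <;> rw [hfv, if_neg h]
        · omega
        · have := i'.2
          omega
      exact (hJ1prop _ this).2.1.1
  have hvinj : Function.Injective (fun i' : Fin k => col (σ (fv i'))) := by
    intro i1 i2 he
    simp only at he
    by_contra hne
    have hσne : σ (fv i1) ≠ σ (fv i2) := by
      intro hσeq
      apply hne
      have := σ.injective hσeq
      have hval : (fv i1 : ℕ) = (fv i2 : ℕ) := congrArg Fin.val this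
      rw [hfv, hfv] at hval
      have h1 := i1.2
      have h2 := i2.2
      apply Fin.ext
      rcases Nat.lt_or_ge (i1 : ℕ) m with hc1 | hc1 <;>
        rcases Nat.lt_or_ge (i2 : ℕ) m with hc2 | hc2
      · rw [if_pos hc1, if_pos hc2] at hval; omega
      · rw [if_pos hc1, if_neg (not_lt.mpr hc2)] at hval; omega
      · rw [if_neg (not_lt.mpr hc1), if_pos hc2] at hval; omega
      · rw [if_neg (not_lt.mpr hc1), if_neg (not_lt.mpr hc2)] at hval; omega
    by_cases h1 : (i1 : ℕ) < m <;> by_cases h2 : (i2 : ℕ) < m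
    · have hm1 : σ (fv i1) ∈ J0 := by
        apply hσJ0; rw [hfv, if_pos h1]; exact h1
      have hm2 : σ (fv i2) ∈ J0 := by
        apply hσJ0; rw [hfv, if_pos h2]; exact h2
      apply hσne
      rw [← (hJ0prop _ hm1).2.2, ← (hJ0prop _ hm2).2.2, he]
    · have hm1 : σ (fv i1) ∈ J0 := by
        apply hσJ0; rw [hfv, if_pos h1]; exact h1
      have hm2 : σ (fv i2) ∈ J1 := by
        apply hσJ1 <;> rw [hfv, if_neg h2]
        · omega
        · have := i2.2; omega
      exact (hJ1prop _ hm2).2.1.2 (he ▸ (hJ0prop _ hm1).2.1)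
    · have hm1 : σ (fv i1) ∈ J1 := by
        apply hσJ1 <;> rw [hfv, if_neg h1]
        · omega
        · have := i1.2; omega
      have hm2 : σ (fv i2) ∈ J0 := by
        apply hσJ0; rw [hfv, if_pos h2]; exact h2
      exact (hJ1prop _ hm1).2.1.2 (he ▸ (hJ0prop _ hm2).2.1)
    · have hm1 : σ (fv i1) ∈ J1 := by
        apply hσJ1 <;> rw [hfv, if_neg h1]
        · omega
        · have := i1.2; omega
      have hm2 : σ (fv i2) ∈ J1 := by
        apply hσJ1 <;> rw [hfv, if_neg h2]
        · omega
        · have := i2.2; omega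
      apply hσne
      rw [← (hJ1prop _ hm1).2.2, ← (hJ1prop _ hm2).2.2, he]
  have hBunit : IsUnit B := by
    rw [← Matrix.linearIndependent_cols_iff_isUnit]
    have heq : (fun i' : Fin k => B.transpose i') =
        fun i' : Fin k => ((⟨col (σ (fv i')), hvmem i'⟩ : B0) : Fin k → F) := rfl
    show LinearIndependent F (fun i' : Fin k => B.transpose i')
    rw [heq]
    apply hB0ind.comp
    intro i1 i2 h
    exact hvinj (Subtype.ext_iff.mp h)
  have hBdetu : IsUnit B.det := (Matrix.isUnit_iff_isUnit_det B).mp hBunit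
  set R : Matrix (Fin k) (Fin n) F := B⁻¹ * G.submatrix id ⇑σ with hRdef
  have hP1 : ∀ i i' : Fin k, R i (fv i') = if i = i' then 1 else 0 := by
    intro i i'
    have h2 : (B⁻¹ * B) i i' = if i = i' then 1 else 0 := by
      rw [Matrix.nonsing_inv_mul B hBdetu, Matrix.one_apply]
    rw [← h2, hRdef, Matrix.mul_apply, Matrix.mul_apply]
    rfl
  -- rows of R as codewords
  set w : Fin k → Fin n → F := fun i j => ∑ l, B⁻¹ i l * G l j with hwdef
  have hRw : ∀ (i : Fin k) (p : Fin n), R i p = w i (σ p) := by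
    intro i p
    rw [hRdef, Matrix.mul_apply]
    rfl
  have hwC : ∀ i : Fin k, w i ∈ C := by
    intro i
    have hw : w i = ∑ l, B⁻¹ i l • G l := by
      funext j
      rw [Finset.sum_apply]
      simp [hwdef, smul_eq_mul]
    rw [hw, hC]
    exact Submodule.sum_mem _ fun l _ =>
      Submodule.smul_mem _ _ (Submodule.subset_span ⟨l, rfl⟩)
  have hP2 : ∀ i : Fin k, m ≤ (i : ℕ) → ∀ j : Fin n, c j = 0 → w i j = 0 := by
    intro i hi
    set ψ : (Fin k → F) →ₗ[F] F := ∑ l, B⁻¹ i l • (LinearMap.proj l) with hψdef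
    have hψap : ∀ u, ψ u = ∑ l, B⁻¹ i l * u l := by
      intro u
      simp [hψdef, LinearMap.sum_apply, smul_eq_mul]
    have hwψ : ∀ j : Fin n, w i j = ψ (col j) := by
      intro j
      rw [hψap]
    have hbker : b ⊆ ↑(LinearMap.ker ψ) := by
      intro u hu
      obtain ⟨hcz, hcu⟩ := hg0 u hu
      obtain ⟨p, hpm, hpσ⟩ := hσJ0' (g0 u) (hg0J0 u hu)
      have hpk : (p : ℕ) < k := by omega
      have hfp : fv ⟨(p : ℕ), hpk⟩ = p := by
        apply Fin.ext
        rw [hfv]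
        exact if_pos hpm
      rw [SetLike.mem_coe, LinearMap.mem_ker, ← hcu, ← hwψ, ← hpσ, ← hRw, ← hfp, hP1]
      rw [if_neg]
      intro he
      have : (i : ℕ) = (p : ℕ) := by rw [he]
      omega
    intro j hj
    have hker : Submodule.span F b ≤ LinearMap.ker ψ := Submodule.span_le.mpr hbker
    rw [hwψ j]
    exact LinearMap.mem_ker.mp (hker (hTspan j hj))
  have hσT : ∀ p : Fin n, (p : ℕ) < n - d → c (σ p) = 0 := by
    intro p hp
    by_cases h : (p : ℕ) < m
    · exact hJ0c _ (hσJ0 p h)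
    · exact hT1T _ (hσT1 p (le_of_not_gt h) hp)
  -- zeros to the left of the pivots
  have hL : ∀ (i : Fin k) (p : Fin n), (p : ℕ) < (fv i : ℕ) → R i p = 0 := by
    intro i p hp
    by_cases him : (i : ℕ) < m
    · have hfi : (fv i : ℕ) = (i : ℕ) := by rw [hfv, if_pos him]
      have hpm : (p : ℕ) < m := by omega
      have hpk : (p : ℕ) < k := by omega
      have hfp : fv ⟨(p : ℕ), hpk⟩ = p := by
        apply Fin.ext
        rw [hfv]
        exact if_pos hpm
      rw [← hfp, hP1, if_neg]
      intro he
      have : (i : ℕ) = (p : ℕ) := by rw [he]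
      omega
    · have hfi : (fv i : ℕ) = n - d + ((i : ℕ) - m) := by rw [hfv, if_neg him]
      by_cases hpd : (p : ℕ) < n - d
      · rw [hRw]
        exact hP2 i (le_of_not_gt him) _ (hσT p hpd)
      · have hik := i.2
        have hq : m + ((p : ℕ) - (n - d)) < k := by omega
        have hfq : fv ⟨m + ((p : ℕ) - (n - d)), hq⟩ = p := by
          apply Fin.ext
          rw [hfv, if_neg (by simp only [Fin.val_mk]; omega)]
          simp only [Fin.val_mk]
          omega
        rw [← hfq, hP1, if_neg]
        intro he
        have : (i : ℕ) = m + ((p : ℕ) - (n - d)) := by rw [he]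
        omega
  have hRne : ∀ i : Fin k, R i ≠ 0 := by
    intro i h
    have h1 : R i (fv i) = 1 := by rw [hP1, if_pos rfl]
    rw [h] at h1
    simp at h1
  have hRREF : IsRREF R := by
    constructor
    · intro i j _ h0
      exact absurd h0 (hRne i)
    · intro i _
      refine ⟨fv i, by rw [hP1, if_pos rfl], fun c' hc' => hL i c' (Fin.lt_def.mp hc'),
        fun i' hne => by rw [hP1, if_neg hne], ?_⟩
      intro i' hii' _ c' hc'
      by_contra hle
      push_neg at hle
      have h1 : (c' : ℕ) < (fv i' : ℕ) :=
        lt_of_le_of_lt (Fin.le_def.mp hle) (hfvmono i i' (Fin.lt_def.mp hii'))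
      exact hc'.1 (hL i' c' h1)
  -- the distinguished row
  set i0 : Fin k := ⟨m, hmk⟩ with hi0def
  have hi0m : m ≤ (i0 : ℕ) := le_refl m
  have hnormR : hammingNorm (R i0) = (Finset.univ.filter fun p : Fin n => R i0 p ≠ 0).card := rfl
  have hup : hammingNorm (R i0) ≤ d := by
    have hsub : (Finset.univ.filter fun p : Fin n => R i0 p ≠ 0) ⊆
        Finset.univ.filter fun p : Fin n => n - d ≤ (p : ℕ) := by
      intro p hp
      rw [Finset.mem_filter] at hp ⊢
      refine ⟨Finset.mem_univ _, ?_⟩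
      by_contra h
      push_neg at h
      exact hp.2 (by rw [hRw]; exact hP2 i0 hi0m _ (hσT p h))
    have hcard1 : (Finset.univ.filter fun p : Fin n => (p : ℕ) < n - d).card = n - d := by
      apply Finset.card_eq_of_bijective (fun i hi => ⟨i, by omega⟩)
      · intro p hp
        rw [Finset.mem_filter] at hp
        exact ⟨(p : ℕ), hp.2, rfl⟩
      · intro i hi
        rw [Finset.mem_filter]
        exact ⟨Finset.mem_univ _, hi⟩
      · intro i j hi hj hij
        simpa using congrArg Fin.val hij
    have hcard2 : (Finset.univ.filter fun p : Fin n => n - d ≤ (p : ℕ)).card = d := by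
      have h := Finset.card_filter_add_card_filter_not
        (s := (Finset.univ : Finset (Fin n))) (p := fun p : Fin n => (p : ℕ) < n - d)
      simp only [not_lt, Finset.card_univ, Fintype.card_fin] at h
      omega
    rw [hnormR, ← hcard2]
    exact Finset.card_le_card hsub
  have hlow : d ≤ hammingNorm (R i0) := by
    have hwne : w i0 ≠ 0 := by
      intro h
      have h1 : R i0 (fv i0) = 1 := by rw [hP1, if_pos rfl]
      rw [hRw, h] at h1
      simp at h1
    have hd' : d ≤ hammingNorm (w i0) := hmin ⟨w i0, hwC i0, hwne, rfl⟩
    have heq : hammingNorm (w i0) = hammingNorm (R i0) := by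
      show (Finset.univ.filter fun j : Fin n => w i0 j ≠ 0).card =
        (Finset.univ.filter fun p : Fin n => R i0 p ≠ 0).card
      apply Finset.card_bij (fun j _ => σ.symm j)
      · intro j hj
        rw [Finset.mem_filter] at hj ⊢
        refine ⟨Finset.mem_univ _, ?_⟩
        rw [hRw, Equiv.apply_symm_apply]
        exact hj.2
      · intro j1 _ j2 _ h
        exact σ.symm.injective h
      · intro p hp
        rw [Finset.mem_filter] at hp
        refine ⟨σ p, ?_, by simp⟩
        rw [Finset.mem_filter]
        exact ⟨Finset.mem_univ _, by rw [← hRw]; exact hp.2⟩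
    omega
  exact ⟨σ, R, B⁻¹, Matrix.isUnit_nonsing_inv_iff.mpr hBunit, hRdef, hRREF,
    ⟨i0, le_antisymm hup hlow⟩⟩
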